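/- Let n ≥ 6, y > n − 2, and z > 0 with z² > 0. Assume y < (n−1)/2 + √((n−1)²/4 + z²) (Segura's upper bound for f_n(z)). If z₀² := −(ny − 2n − 2)·n·y·(ny − y² − 2n − 2)/(ny − 2n − 2)² is positive, then (n−2)/2 + √((n−2)²/4 + z₀²) − y > 0; equivalently 2y − n + 2 > 0 implies ((n−2−2y)² < (−8 + n³(y−2) + n²(−4y²+4y+6) + n(4y³+12y))/(−2 + (y−2)n)), which reduces to 8y(2n + y + 2)/((y−2)n − 2) > 0. -/

import Mathlib

/-- Key step for `L(α, n, 2, R) < 0` when `n ≥ 6`: at the candidate zero `z₀`, Segura's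
bounds lead to a contradiction. -/
theorem degree_two_no_zero (n : ℕ) (hn : 6 ≤ n) (y z : ℝ) (hy : (n : ℝ) - 2 < y)
    (hz : 0 < z)
    (hub : y < ((n : ℝ) - 1) / 2 + Real.sqrt (((n : ℝ) - 1) ^ 2 / 4 + z ^ 2)) :
    0 < -((n : ℝ) * y - 2 * n - 2) * (n : ℝ) * y * ((n : ℝ) * y - y ^ 2 - 2 * n - 2) /
        ((n : ℝ) * y - 2 * n - 2) ^ 2 →
      (((n : ℝ) - 2) / 2 + Real.sqrt (((n : ℝ) - 2) ^ 2 / 4 +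
          -((n : ℝ) * y - 2 * n - 2) * (n : ℝ) * y * ((n : ℝ) * y - y ^ 2 - 2 * n - 2) /
            ((n : ℝ) * y - 2 * n - 2) ^ 2) - y > 0) ∧
      (0 < 2 * y - (n : ℝ) + 2 →
        ((n : ℝ) - 2 - 2 * y) ^ 2 <
          (-8 + (n : ℝ) ^ 3 * (y - 2) + (n : ℝ) ^ 2 * (-4 * y ^ 2 + 4 * y + 6) +
            (n : ℝ) * (4 * y ^ 3 + 12 * y)) / (-2 + (y - 2) * (n : ℝ))) ∧
      8 * y * (2 * (n : ℝ) + y + 2) / ((y - 2) * (n : ℝ) - 2) > 0 := by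
  intro hE
  have hN : (6 : ℝ) ≤ (n : ℝ) := by exact_mod_cast hn
  have hy4 : (4 : ℝ) < y := by linarith
  have hA : 0 < (n : ℝ) * y - 2 * n - 2 := by nlinarith
  have hA2 : (0 : ℝ) < ((n : ℝ) * y - 2 * n - 2) ^ 2 := by positivity
  have hA' : 0 < (y - 2) * (n : ℝ) - 2 := by nlinarith
  have hpos : 0 < 8 * y * (2 * (n : ℝ) + y + 2) := by nlinarith
  refine ⟨?_, ?_, ?_⟩
  · have hx : 0 ≤ y - ((n : ℝ) - 2) / 2 := by linarith
    have h1 : y - ((n : ℝ) - 2) / 2 <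
        Real.sqrt (((n : ℝ) - 2) ^ 2 / 4 +
          -((n : ℝ) * y - 2 * n - 2) * (n : ℝ) * y * ((n : ℝ) * y - y ^ 2 - 2 * n - 2) /
            ((n : ℝ) * y - 2 * n - 2) ^ 2) := by
      rw [show (((n : ℝ) - 2) ^ 2 / 4 +
          -((n : ℝ) * y - 2 * n - 2) * (n : ℝ) * y * ((n : ℝ) * y - y ^ 2 - 2 * n - 2) /
            ((n : ℝ) * y - 2 * n - 2) ^ 2) =
          (((n : ℝ) - 2) ^ 2 / 4 * ((n : ℝ) * y - 2 * n - 2) ^ 2 +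
            -((n : ℝ) * y - 2 * n - 2) * (n : ℝ) * y * ((n : ℝ) * y - y ^ 2 - 2 * n - 2)) /
            ((n : ℝ) * y - 2 * n - 2) ^ 2 by rw [add_div, mul_div_cancel_right₀ _ hA2.ne']]
      rw [Real.lt_sqrt hx, lt_div_iff₀ hA2]
      have key : (y - ((n : ℝ) - 2) / 2) ^ 2 * ((n : ℝ) * y - 2 * n - 2) ^ 2 +
          2 * y * ((n : ℝ) * y - 2 * n - 2) * (2 * (n : ℝ) + y + 2) =
          ((n : ℝ) - 2) ^ 2 / 4 * ((n : ℝ) * y - 2 * n - 2) ^ 2 +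
            -((n : ℝ) * y - 2 * n - 2) * (n : ℝ) * y * ((n : ℝ) * y - y ^ 2 - 2 * n - 2) := by
        ring
      nlinarith [mul_pos (mul_pos (show (0:ℝ) < 2 * y by linarith) hA)
        (show (0:ℝ) < 2 * (n : ℝ) + y + 2 by linarith)]
    linarith
  · intro h2
    have hden : 0 < -2 + (y - 2) * (n : ℝ) := by linarith
    rw [lt_div_iff₀ hden]
    have key : ((n : ℝ) - 2 - 2 * y) ^ 2 * (-2 + (y - 2) * (n : ℝ)) +
        8 * y * (2 * (n : ℝ) + y + 2) =
        -8 + (n : ℝ) ^ 3 * (y - 2) + (n : ℝ) ^ 2 * (-4 * y ^ 2 + 4 * y + 6) +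
          (n : ℝ) * (4 * y ^ 3 + 12 * y) := by ring
    linarith
  · exact div_pos hpos hA'
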